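/- Let M be a positive integer, L = 2M, and let R be an L×L skew-symmetric complex matrix that is checkerboard up to permutation, i.e. there exist an L×L permutation matrix P and an M×M complex matrix G such that P^T R P = [[0, G], [−G^T, 0]] in 2×2 block form. Then for every real α > 0, Pf_α(R) = Det_α(G). -/

import Mathlib

open scoped BigOperators Matrix

/-- The square submatrix of `A` with rows indexed by `I` and columns indexed by `J`
(both in increasing order), as a determinant; it is `0` if `I.card ≠ J.card`. -/
noncomputable def subdetC {N : ℕ} (A : Matrix (Fin N) (Fin N) ℂ) (I J : Finset (Fin N)) : ℂ :=
  if h : J.card = I.card then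
    Matrix.det (Matrix.of fun a b : Fin I.card =>
      A (I.orderEmbOfFin rfl a) (J.orderEmbOfFin h b))
  else 0

/-- `Det_β(A) = Σ_{k=0}^{N} Σ_{|I|=|J|=k} |det A[I,J]|^β`. -/
noncomputable def DetPowC {N : ℕ} (A : Matrix (Fin N) (Fin N) ℂ) (β : ℝ) : ℝ :=
  ∑ k ∈ Finset.range (N + 1),
    ∑ I ∈ Finset.univ.filter (fun I : Finset (Fin N) => I.card = k),
      ∑ J ∈ Finset.univ.filter (fun J : Finset (Fin N) => J.card = k),
        ‖(subdetC A I J)‖ ^ β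

/-- `Pf_β(R) = Σ_{S, |S| even} |det R[S,S]|^{β/2}`, the sum of β-th powers of the
absolute values of all principal Pfaffian minors of a skew-symmetric matrix. -/
noncomputable def PfPowC {N : ℕ} (R : Matrix (Fin N) (Fin N) ℂ) (β : ℝ) : ℝ :=
  ∑ S ∈ Finset.univ.filter (fun S : Finset (Fin N) => Even S.card),
    ‖(subdetC R S S)‖ ^ (β / 2)

/-- `P` is a permutation matrix. -/
def IsPermMatrix {n : ℕ} (P : Matrix (Fin n) (Fin n) ℂ) : Prop :=
  ∃ σ : Equiv.Perm (Fin n), ∀ i j, P i j = if σ j = i then 1 else 0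

/-- The `2M × 2M` block matrix `[[0, G], [-Gᵀ, 0]]`. -/
def checkerBlock {M : ℕ} (G : Matrix (Fin M) (Fin M) ℂ) :
    Matrix (Fin (2 * M)) (Fin (2 * M)) ℂ :=
  Matrix.reindex (finSumFinEquiv.trans (finCongr (two_mul M).symm))
    (finSumFinEquiv.trans (finCongr (two_mul M).symm))
    (Matrix.fromBlocks 0 G (-Gᵀ) 0)

lemma abs_int_units_mul (u : ℤˣ) (z : ℂ) :
    ‖((u : ℤ) * z)‖ = ‖z‖ := by
  rcases Int.units_eq_one_or u with h | h <;> simp [h]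

lemma absdet_submatrix_congr {ι : Type*} [DecidableEq ι] {k k' : ℕ}
    (A : Matrix ι ι ℂ) (f g : Fin k → ι) (f' g' : Fin k' → ι)
    (hf : Function.Injective f) (hg : Function.Injective g)
    (hf' : Function.Injective f') (hg' : Function.Injective g')
    (hrf : Set.range f = Set.range f') (hrg : Set.range g = Set.range g') :
    ‖(A.submatrix f g).det‖ = ‖(A.submatrix f' g').det‖ := by
  let π : Fin k ≃ Fin k' :=
    (Equiv.ofInjective f hf).trans ((Equiv.setCongr hrf).trans (Equiv.ofInjective f' hf').symm)
  let τ : Fin k ≃ Fin k' :=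
    (Equiv.ofInjective g hg).trans ((Equiv.setCongr hrg).trans (Equiv.ofInjective g' hg').symm)
  have hπ : ∀ a, f' (π a) = f a := by
    intro a
    simp only [π, Equiv.trans_apply]
    rw [Equiv.apply_ofInjective_symm hf']
    rfl
  have hτ : ∀ a, g' (τ a) = g a := by
    intro a
    simp only [τ, Equiv.trans_apply]
    rw [Equiv.apply_ofInjective_symm hg']
    rfl
  have hM : A.submatrix f g
      = ((A.submatrix f' g').submatrix π π).submatrix id (τ.trans π.symm) := by
    ext i j
    simp only [Matrix.submatrix_apply, id_eq, Equiv.trans_apply, Equiv.apply_symm_apply, hπ, hτ]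
  rw [hM, Matrix.det_permute', Matrix.det_submatrix_equiv_self]
  exact abs_int_units_mul _ _

/-- `subdetC` in terms of an arbitrary pair of injective enumerations of the index sets. -/
lemma abs_subdetC_eq {N k : ℕ} (A : Matrix (Fin N) (Fin N) ℂ) (I J : Finset (Fin N))
    (f g : Fin k → Fin N) (hf : Function.Injective f) (hg : Function.Injective g)
    (hI : Set.range f = ↑I) (hJ : Set.range g = ↑J) :
    ‖(subdetC A I J)‖ = ‖(A.submatrix f g).det‖ := by
  have hIim : I = Finset.univ.image f := by
    apply Finset.coe_injective
    rw [Finset.coe_image, Finset.coe_univ, Set.image_univ, hI]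
  have hJim : J = Finset.univ.image g := by
    apply Finset.coe_injective
    rw [Finset.coe_image, Finset.coe_univ, Set.image_univ, hJ]
  have hIcard : I.card = k := by
    rw [hIim, Finset.card_image_of_injective _ hf, Finset.card_univ, Fintype.card_fin]
  have hJcard : J.card = k := by
    rw [hJim, Finset.card_image_of_injective _ hg, Finset.card_univ, Fintype.card_fin]
  have h : J.card = I.card := by rw [hIcard, hJcard]
  rw [subdetC, dif_pos h]
  have : (Matrix.of fun a b : Fin I.card =>
      A (I.orderEmbOfFin rfl a) (J.orderEmbOfFin h b))
      = A.submatrix (I.orderEmbOfFin rfl) (J.orderEmbOfFin h) := rfl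
  rw [this]
  exact absdet_submatrix_congr A _ _ f g
    (I.orderEmbOfFin rfl).injective (J.orderEmbOfFin h).injective hf hg
    (by rw [Finset.range_orderEmbOfFin, hI]) (by rw [Finset.range_orderEmbOfFin, hJ])

lemma det_skew_odd {n : ℕ} (hn : ¬ Even n) (B : Matrix (Fin n) (Fin n) ℂ)
    (hB : Bᵀ = -B) : B.det = 0 := by
  have h1 : B.det = (-1) ^ n * B.det := by
    conv_lhs => rw [← Matrix.det_transpose, hB]
    rw [Matrix.det_neg]
    simp
  rw [(Nat.not_even_iff_odd.mp hn).neg_one_pow] at h1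
  have : (2 : ℂ) * B.det = 0 := by linear_combination h1
  simpa using this

lemma exists_ker {r c : ℕ} (hrc : r < c) (A : Matrix (Fin r) (Fin c) ℂ) :
    ∃ v ≠ 0, A.mulVec v = 0 := by
  by_contra hcon
  push_neg at hcon
  have hinj : Function.Injective A.mulVecLin := by
    rw [← LinearMap.ker_eq_bot, LinearMap.ker_eq_bot']
    intro m hm
    by_contra hm0
    exact hcon m hm0 (by simpa using hm)
  have := LinearMap.finrank_le_finrank_of_injective hinj
  simp [Module.finrank_fin_fun] at this
  omega

lemma blockdet_ne {k₁ k₂ : ℕ} (h : k₁ ≠ k₂)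
    (B : Matrix (Fin k₁) (Fin k₂) ℂ) (C : Matrix (Fin k₂) (Fin k₁) ℂ) :
    (Matrix.fromBlocks 0 B C 0).det = 0 := by
  rw [← Matrix.exists_mulVec_eq_zero_iff]
  rcases lt_or_gt_of_ne h with hlt | hlt
  · obtain ⟨v, hv, hv0⟩ := exists_ker hlt B
    refine ⟨Sum.elim 0 v, ?_, ?_⟩
    · intro h0
      apply hv
      funext i
      exact congrFun h0 (Sum.inr i)
    · rw [Matrix.fromBlocks_mulVec]
      simp [hv0]
  · obtain ⟨v, hv, hv0⟩ := exists_ker hlt C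
    refine ⟨Sum.elim v 0, ?_, ?_⟩
    · intro h0
      apply hv
      funext i
      exact congrFun h0 (Sum.inl i)
    · rw [Matrix.fromBlocks_mulVec]
      simp [hv0]

lemma blockdet_eq {k : ℕ} (B : Matrix (Fin k) (Fin k) ℂ) :
    ‖(Matrix.fromBlocks 0 B (-Bᵀ) 0).det‖ = ‖B.det‖ ^ 2 := by
  have h1 : (Matrix.fromBlocks 0 B (-Bᵀ) 0).submatrix (Equiv.sumComm (Fin k) (Fin k)) id
      = Matrix.fromBlocks (-Bᵀ) 0 0 B := by
    ext i j
    cases i <;> cases j <;> rfl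
  have h2 := Matrix.det_permute (Equiv.sumComm (Fin k) (Fin k))
      (Matrix.fromBlocks 0 B (-Bᵀ) 0)
  rw [h1, Matrix.det_fromBlocks_zero₁₂] at h2
  have h3 := congrArg Norm.norm h2
  rw [norm_mul, norm_mul] at h3
  have hs : ‖((Equiv.Perm.sign (Equiv.sumComm (Fin k) (Fin k)) : ℤ) : ℂ)‖ = 1 := by
    rcases Int.units_eq_one_or (Equiv.Perm.sign (Equiv.sumComm (Fin k) (Fin k))) with h | h <;>
      simp [h]
  have hBT : ‖(-Bᵀ).det‖ = ‖B.det‖ := by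
    rw [Matrix.det_neg, Matrix.det_transpose, norm_mul]
    simp [abs_pow]
  rw [hBT, hs, one_mul] at h3
  rw [← h3]
  ring

/-- The reindexing equivalence used in `checkerBlock`. -/
def epsE (M : ℕ) : (Fin M ⊕ Fin M) ≃ Fin (2 * M) :=
  finSumFinEquiv.trans (finCongr (two_mul M).symm)

lemma checkerBlock_apply {M : ℕ} (G : Matrix (Fin M) (Fin M) ℂ) (a b : Fin (2 * M)) :
    checkerBlock G a b
      = Matrix.fromBlocks 0 G (-Gᵀ) 0 ((epsE M).symm a) ((epsE M).symm b) := rfl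

/-- Left-block embedding `Fin M ↪ Fin (2M)`. -/
def embL (M : ℕ) : Fin M ↪ Fin (2 * M) :=
  ⟨fun x => epsE M (Sum.inl x), fun a b h => by simpa using (epsE M).injective h⟩

/-- Right-block embedding `Fin M ↪ Fin (2M)`. -/
def embR (M : ℕ) : Fin M ↪ Fin (2 * M) :=
  ⟨fun x => epsE M (Sum.inr x), fun a b h => by simpa using (epsE M).injective h⟩

/-- The subset of `Fin 2M` corresponding to the pair `(I, J)`. -/
def Phi (M : ℕ) (I J : Finset (Fin M)) : Finset (Fin (2 * M)) :=
  I.map (embL M) ∪ J.map (embR M)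

lemma mem_Phi {M : ℕ} (I J : Finset (Fin M)) (x : Fin (2 * M)) :
    x ∈ Phi M I J ↔ (∃ i ∈ I, epsE M (Sum.inl i) = x) ∨ (∃ j ∈ J, epsE M (Sum.inr j) = x) := by
  simp [Phi, embL, embR]
  exact Iff.rfl

/-- Enumeration of the principal `checkerBlock` submatrix on `Phi M I J` as a 2×2 block matrix. -/
lemma abs_subdetC_checker {M : ℕ} (G : Matrix (Fin M) (Fin M) ℂ)
    (I J : Finset (Fin M)) {k₁ k₂ : ℕ} (eI : Fin k₁ → Fin M) (eJ : Fin k₂ → Fin M)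
    (hIinj : Function.Injective eI) (hJinj : Function.Injective eJ)
    (hrI : Set.range eI = ↑I) (hrJ : Set.range eJ = ↑J) :
    ‖(subdetC (checkerBlock G) (Phi M I J) (Phi M I J))‖
      = ‖(Matrix.fromBlocks 0 (G.submatrix eI eJ)
          ((-Gᵀ).submatrix eJ eI) 0).det‖ := by
  set F : Fin (k₁ + k₂) → Fin (2 * M) :=
    fun a => epsE M (Sum.map eI eJ (finSumFinEquiv.symm a)) with hF
  have hFinj : Function.Injective F :=
    (epsE M).injective.comp ((hIinj.sumMap hJinj).comp finSumFinEquiv.symm.injective)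
  have hrF : Set.range F = ↑(Phi M I J) := by
    ext x
    rw [Finset.mem_coe, mem_Phi]
    constructor
    · rintro ⟨a, rfl⟩
      rcases hq : finSumFinEquiv.symm a with i | j
      · left
        refine ⟨eI i, ?_, by rw [hF]; simp [hq]⟩
        rw [← Finset.mem_coe, ← hrI]; exact ⟨i, rfl⟩
      · right
        refine ⟨eJ j, ?_, by rw [hF]; simp [hq]⟩
        rw [← Finset.mem_coe, ← hrJ]; exact ⟨j, rfl⟩
    · rintro (⟨i, hi, rfl⟩ | ⟨j, hj, rfl⟩)
      · rw [← Finset.mem_coe, ← hrI] at hi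
        obtain ⟨i', rfl⟩ := hi
        exact ⟨finSumFinEquiv (Sum.inl i'), by rw [hF]; simp⟩
      · rw [← Finset.mem_coe, ← hrJ] at hj
        obtain ⟨j', rfl⟩ := hj
        exact ⟨finSumFinEquiv (Sum.inr j'), by rw [hF]; simp⟩
  rw [abs_subdetC_eq _ _ _ F F hFinj hFinj hrF hrF]
  have hsub : (checkerBlock G).submatrix F F
      = ((Matrix.fromBlocks 0 (G.submatrix eI eJ) ((-Gᵀ).submatrix eJ eI) 0).submatrix
          ⇑finSumFinEquiv.symm ⇑finSumFinEquiv.symm) := by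
    ext a b
    simp only [Matrix.submatrix_apply]
    rw [hF, checkerBlock_apply]
    have h1 : (epsE M).symm (epsE M (Sum.map eI eJ (finSumFinEquiv.symm a)))
        = Sum.map eI eJ (finSumFinEquiv.symm a) := (epsE M).symm_apply_apply _
    have h2 : (epsE M).symm (epsE M (Sum.map eI eJ (finSumFinEquiv.symm b)))
        = Sum.map eI eJ (finSumFinEquiv.symm b) := (epsE M).symm_apply_apply _
    rw [h1, h2]
    rcases finSumFinEquiv.symm a with i | i <;> rcases finSumFinEquiv.symm b with j | j <;>
      simp [Matrix.fromBlocks]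
  rw [hsub]
  rw [Matrix.det_submatrix_equiv_self (finSumFinEquiv.symm)]

/-- Inverse of `Phi`. -/
def PhiInv (M : ℕ) (T : Finset (Fin (2 * M))) : Finset (Fin M) × Finset (Fin M) :=
  (Finset.univ.filter (fun i => epsE M (Sum.inl i) ∈ T),
   Finset.univ.filter (fun j => epsE M (Sum.inr j) ∈ T))

lemma PhiInv_Phi (M : ℕ) (I J : Finset (Fin M)) : PhiInv M (Phi M I J) = (I, J) := by
  unfold PhiInv
  ext x
  · simp [mem_Phi]
  · simp [mem_Phi]

lemma Phi_PhiInv (M : ℕ) (T : Finset (Fin (2 * M))) :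
    Phi M (PhiInv M T).1 (PhiInv M T).2 = T := by
  ext x
  rw [mem_Phi]
  obtain ⟨s, rfl⟩ := (epsE M).surjective x
  cases s <;> simp [PhiInv]

lemma subdetC_skew_odd {N : ℕ} (R : Matrix (Fin N) (Fin N) ℂ) (hskew : Rᵀ = -R)
    (S : Finset (Fin N)) (hS : ¬ Even S.card) : subdetC R S S = 0 := by
  rw [subdetC, dif_pos rfl]
  apply det_skew_odd hS
  ext a b
  have := congrFun (congrFun hskew (S.orderEmbOfFin rfl a)) (S.orderEmbOfFin rfl b)
  simpa [Matrix.transpose_apply, Matrix.neg_apply] using this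

lemma perm_conj {n : ℕ} (P R : Matrix (Fin n) (Fin n) ℂ) (σ : Equiv.Perm (Fin n))
    (hP : ∀ i j, P i j = if σ j = i then 1 else 0) (a b : Fin n) :
    (Pᵀ * R * P) a b = R (σ a) (σ b) := by
  have h1 : ∀ y, (Pᵀ * R) a y = R (σ a) y := by
    intro y
    rw [Matrix.mul_apply]
    simp only [Matrix.transpose_apply, hP, ite_mul, one_mul, zero_mul]
    rw [Finset.sum_ite_eq]
    simp
  rw [Matrix.mul_apply]
  simp only [h1, hP, mul_ite, mul_one, mul_zero]
  rw [Finset.sum_ite_eq]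
  simp

/-- **Absolute-value Pfaffian–Minor correspondence.**  If `R` is a `2M × 2M`
skew-symmetric complex matrix which is checkerboard up to permutation, i.e.
`Pᵀ R P = [[0, G], [-Gᵀ, 0]]` for some permutation matrix `P`, then for every
real `α > 0` one has `Pf_α(R) = Det_α(G)`. -/
theorem pfaffian_minor_correspondence (M : ℕ) (hM : 0 < M)
    (R : Matrix (Fin (2 * M)) (Fin (2 * M)) ℂ) (hskew : Rᵀ = -R)
    (G : Matrix (Fin M) (Fin M) ℂ)
    (hcheck : ∃ P : Matrix (Fin (2 * M)) (Fin (2 * M)) ℂ,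
      IsPermMatrix P ∧ Pᵀ * R * P = checkerBlock G) :
    ∀ α : ℝ, 0 < α → PfPowC R α = DetPowC G α := by
  intro α hα
  obtain ⟨P, ⟨σ, hP⟩, hPRP⟩ := hcheck
  have hα2 : α / 2 ≠ 0 := by positivity
  have hC : ∀ a b, checkerBlock G a b = R (σ a) (σ b) := by
    intro a b
    rw [← hPRP]
    exact perm_conj P R σ hP a b
  have hR : ∀ x y, R x y = checkerBlock G (σ⁻¹ x) (σ⁻¹ y) := by
    intro x y
    rw [hC]
    simp
  -- Step 0: extend the Pfaffian sum to all subsets.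
  have step0 : PfPowC R α = ∑ S : Finset (Fin (2 * M)),
      ‖(subdetC R S S)‖ ^ (α / 2) := by
    rw [PfPowC]
    apply Finset.sum_subset (Finset.filter_subset _ _)
    intro S _ hS
    simp only [Finset.mem_filter, Finset.mem_univ, true_and] at hS
    rw [subdetC_skew_odd R hskew S hS]
    simp [Real.zero_rpow hα2]
  -- Step A: transfer each principal minor of `R` to one of `checkerBlock G`.
  have stepA : ∀ S : Finset (Fin (2 * M)), ‖(subdetC R S S)‖
      = ‖(subdetC (checkerBlock G) (S.image ⇑σ⁻¹) (S.image ⇑σ⁻¹))‖ := by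
    intro S
    have hinj : Function.Injective (⇑σ⁻¹ ∘ ⇑(S.orderEmbOfFin rfl)) :=
      (Equiv.injective _).comp (Finset.orderEmbOfFin _ _).injective
    have hrange : Set.range (⇑σ⁻¹ ∘ ⇑(S.orderEmbOfFin rfl)) = ↑(S.image ⇑σ⁻¹) := by
      rw [Set.range_comp, Finset.range_orderEmbOfFin, Finset.coe_image]
    have hmat : R.submatrix ⇑(S.orderEmbOfFin rfl) ⇑(S.orderEmbOfFin rfl)
        = (checkerBlock G).submatrix (⇑σ⁻¹ ∘ ⇑(S.orderEmbOfFin rfl))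
            (⇑σ⁻¹ ∘ ⇑(S.orderEmbOfFin rfl)) := by
      ext a b
      exact hR _ _
    rw [abs_subdetC_eq R S S _ _ (Finset.orderEmbOfFin _ _).injective (Finset.orderEmbOfFin _ _).injective
        (Finset.range_orderEmbOfFin _ _) (Finset.range_orderEmbOfFin _ _), hmat,
      ← abs_subdetC_eq (checkerBlock G) _ _ _ _ hinj hinj hrange hrange]
    all_goals rfl
  -- Step AB: reindex the sum over subsets by the permutation.
  have hbij : Function.Bijective (fun S : Finset (Fin (2 * M)) => S.image ⇑σ⁻¹) := by
    apply Function.bijective_iff_has_inverse.mpr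
    refine ⟨fun T => T.image ⇑σ, fun S => ?_, fun T => ?_⟩
    · dsimp only
      rw [Finset.image_image]
      have : ⇑σ ∘ ⇑σ⁻¹ = id := funext fun x => σ.apply_symm_apply x
      rw [this, Finset.image_id]
    · dsimp only
      rw [Finset.image_image]
      have : ⇑σ⁻¹ ∘ ⇑σ = id := funext fun x => σ.symm_apply_apply x
      rw [this, Finset.image_id]
  have stepAB : (∑ S : Finset (Fin (2 * M)), ‖(subdetC R S S)‖ ^ (α / 2))
      = ∑ T : Finset (Fin (2 * M)),
          ‖(subdetC (checkerBlock G) T T)‖ ^ (α / 2) :=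
    Fintype.sum_bijective _ hbij _ _ (fun S => by rw [stepA S])
  -- Step BC: reindex subsets of `Fin 2M` by pairs of subsets of `Fin M`.
  have hbij2 : Function.Bijective
      (fun p : Finset (Fin M) × Finset (Fin M) => Phi M p.1 p.2) := by
    apply Function.bijective_iff_has_inverse.mpr
    exact ⟨PhiInv M, fun p => by rw [PhiInv_Phi], fun T => Phi_PhiInv M T⟩
  have stepBC : (∑ T : Finset (Fin (2 * M)),
        ‖(subdetC (checkerBlock G) T T)‖ ^ (α / 2))
      = ∑ p : Finset (Fin M) × Finset (Fin M),
          ‖(subdetC (checkerBlock G) (Phi M p.1 p.2) (Phi M p.1 p.2))‖ ^ (α / 2) :=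
    (Fintype.sum_bijective _ hbij2 _ _ (fun p => rfl)).symm
  -- Step D: evaluate each term.
  have stepD : ∀ I J : Finset (Fin M),
      ‖(subdetC (checkerBlock G) (Phi M I J) (Phi M I J))‖ ^ (α / 2)
        = ‖(subdetC G I J)‖ ^ α := by
    intro I J
    by_cases h : J.card = I.card
    · have hkey := abs_subdetC_checker G I J (⇑(I.orderEmbOfFin rfl)) (⇑(J.orderEmbOfFin h))
        (Finset.orderEmbOfFin _ _).injective (Finset.orderEmbOfFin _ _).injective
        (Finset.range_orderEmbOfFin _ _) (Finset.range_orderEmbOfFin _ _)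
      have hC' : ((-Gᵀ).submatrix ⇑(J.orderEmbOfFin h) ⇑(I.orderEmbOfFin rfl))
          = -(G.submatrix ⇑(I.orderEmbOfFin rfl) ⇑(J.orderEmbOfFin h))ᵀ := by
        ext a b
        simp
      rw [hC', blockdet_eq,
        ← abs_subdetC_eq G I J _ _ (Finset.orderEmbOfFin _ _).injective (Finset.orderEmbOfFin _ _).injective
          (Finset.range_orderEmbOfFin _ _) (Finset.range_orderEmbOfFin _ _)] at hkey
      rw [hkey, ← Real.rpow_natCast (‖(subdetC G I J)‖) 2,
        ← Real.rpow_mul (norm_nonneg _)]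
      congr 1
      push_cast
      ring
    · have hkey := abs_subdetC_checker G I J (⇑(I.orderEmbOfFin rfl)) (⇑(J.orderEmbOfFin rfl))
        (Finset.orderEmbOfFin _ _).injective (Finset.orderEmbOfFin _ _).injective
        (Finset.range_orderEmbOfFin _ _) (Finset.range_orderEmbOfFin _ _)
      rw [blockdet_ne (fun hc => h hc.symm)] at hkey
      rw [hkey, subdetC, dif_neg h]
      simp [Real.zero_rpow hα2, Real.zero_rpow (ne_of_gt hα)]
  -- Step E: identify the sum over pairs with `DetPowC`.
  have stepE : (∑ p : Finset (Fin M) × Finset (Fin M),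
        ‖(subdetC G p.1 p.2)‖ ^ α) = DetPowC G α := by
    rw [Fintype.sum_prod_type]
    have hmaps : ∀ I : Finset (Fin M), I ∈ Finset.univ →
        I.card ∈ Finset.range (M + 1) := by
      intro I _
      refine Finset.mem_range.mpr (Nat.lt_succ_of_le ?_)
      calc I.card ≤ Finset.univ.card := Finset.card_le_univ I
        _ = M := by simp
    have h2 : DetPowC G α = ∑ k ∈ Finset.range (M + 1),
        ∑ I ∈ Finset.univ.filter (fun I : Finset (Fin M) => I.card = k),
          ∑ J ∈ Finset.univ.filter (fun J : Finset (Fin M) => J.card = I.card),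
            ‖(subdetC G I J)‖ ^ α := by
      rw [DetPowC]
      refine Finset.sum_congr rfl fun k _ => Finset.sum_congr rfl fun I hI => ?_
      have hIk : I.card = k := (Finset.mem_filter.mp hI).2
      rw [hIk]
    rw [h2, Finset.sum_fiberwise_of_maps_to hmaps]
    refine Finset.sum_congr rfl fun I _ => ?_
    symm
    apply Finset.sum_subset (Finset.filter_subset _ _)
    intro J _ hJ
    simp only [Finset.mem_filter, Finset.mem_univ, true_and] at hJ
    rw [subdetC, dif_neg hJ]
    simp [Real.zero_rpow (ne_of_gt hα)]
  rw [step0, stepAB, stepBC, ← stepE]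
  exact Finset.sum_congr rfl fun p _ => stepD p.1 p.2
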